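/- Let d ≥ 2 and N ≥ 1 be integers with d = N + 1 and d prime. Let i, j be integers with 0 ≤ i < j ≤ N and let k be an integer not divisible by M̄. Then M̄ does not divide k·(u_j − u_i). (Equivalently, for any primitive M̄-th root of unity ζ and any 0 < k < M̄ one has ζ^{k·u_i} ≠ ζ^{k·u_j}, so the weights of the ℤ/M̄ℤ-action on ℙ^N at distinct coordinates are distinct for every nonzero group element.) -/

import Mathlib

/-- Coprimality of the partial geometric sum with the full one, for prime length. -/
lemma loop_coprime_aux (d N m : ℕ) (hdN : d = N + 1) (hp : Nat.Prime d)
    (hm : 1 ≤ m) (hmN : m ≤ N) :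
    IsCoprime ((∑ l ∈ Finset.range m, (1 - (d : ℤ)) ^ l))
      (∑ l ∈ Finset.range (N + 1), (1 - (d : ℤ)) ^ l) := by
  rw [Int.isCoprime_iff_gcd_eq_one]
  by_contra hg
  obtain ⟨p, hpp, hpdvd⟩ := Nat.exists_prime_and_dvd hg
  have h1 : (p : ℤ) ∣ ∑ l ∈ Finset.range m, (1 - (d : ℤ)) ^ l :=
    dvd_trans (Int.natCast_dvd_natCast.mpr hpdvd) (Int.gcd_dvd_left _ _)
  have h2 : (p : ℤ) ∣ ∑ l ∈ Finset.range (N + 1), (1 - (d : ℤ)) ^ l :=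
    dvd_trans (Int.natCast_dvd_natCast.mpr hpdvd) (Int.gcd_dvd_right _ _)
  haveI : Fact (Nat.Prime p) := ⟨hpp⟩
  set y : ZMod p := 1 - (d : ZMod p) with hy
  have hc1 : (∑ l ∈ Finset.range m, y ^ l) = 0 := by
    have := (ZMod.intCast_zmod_eq_zero_iff_dvd _ p).mpr h1
    push_cast at this
    exact this
  have hc2 : (∑ l ∈ Finset.range (N + 1), y ^ l) = 0 := by
    have := (ZMod.intCast_zmod_eq_zero_iff_dvd _ p).mpr h2
    push_cast at this
    exact this
  have hym : y ^ m = 1 := by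
    have := geom_sum_mul y m
    rw [hc1, zero_mul] at this
    linear_combination -this
  have hyd : y ^ d = 1 := by
    have := geom_sum_mul y (N + 1)
    rw [hc2, zero_mul] at this
    rw [hdN]
    linear_combination -this
  have ho1 : orderOf y ∣ m := orderOf_dvd_of_pow_eq_one hym
  have ho2 : orderOf y ∣ d := orderOf_dvd_of_pow_eq_one hyd
  rcases (Nat.Prime.eq_one_or_self_of_dvd hp _ ho2) with h | h
  · -- y = 1
    have hy1 : y = 1 := orderOf_eq_one_iff.mp h
    rw [hy1] at hc1 hc2
    simp at hc1 hc2
    have hpm : p ∣ m := (ZMod.natCast_eq_zero_iff _ p).mp hc1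
    have hpd : p ∣ N + 1 := (ZMod.natCast_eq_zero_iff _ p).mp (by exact_mod_cast hc2)
    rw [← hdN] at hpd
    have : p = d := (Nat.prime_dvd_prime_iff_eq hpp hp).mp hpd
    subst this
    have := Nat.le_of_dvd hm hpm
    omega
  · have : d ≤ m := h ▸ Nat.le_of_dvd hm ho1
    omega

theorem loop_weights_distinct (d N : ℕ) (hd : 2 ≤ d) (hN : 1 ≤ N) (hdN : d = N + 1)
    (hp : Nat.Prime d) (i j : ℕ) (hij : i < j) (hjN : j ≤ N) (k : ℤ)
    (hk : ¬ (∑ l ∈ Finset.range (N + 1), (1 - (d : ℤ)) ^ l) ∣ k) :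
    ¬ (∑ l ∈ Finset.range (N + 1), (1 - (d : ℤ)) ^ l) ∣
      k * ((∑ l ∈ Finset.range j, (1 - (d : ℤ)) ^ l)
        - ∑ l ∈ Finset.range i, (1 - (d : ℤ)) ^ l) := by
  intro hdvd
  apply hk
  set x : ℤ := 1 - (d : ℤ) with hx
  set M : ℤ := ∑ l ∈ Finset.range (N + 1), x ^ l with hM
  -- split : ∑_{range j} - ∑_{range i} = x^i * ∑_{range (j-i)}
  have hsplit : (∑ l ∈ Finset.range j, x ^ l) - ∑ l ∈ Finset.range i, x ^ l
      = x ^ i * ∑ l ∈ Finset.range (j - i), x ^ l := by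
    have hji : j = i + (j - i) := by omega
    rw [hji, Finset.sum_range_add]
    rw [Finset.mul_sum]
    simp [pow_add]
  rw [hsplit] at hdvd
  have hcop : IsCoprime M (∑ l ∈ Finset.range (j - i), x ^ l) :=
    (loop_coprime_aux d N (j - i) hdN hp (by omega) (by omega)).symm
  have hdvd2 : M ∣ k * x ^ i := by
    apply hcop.dvd_of_dvd_mul_right
    rw [mul_assoc]
    exact hdvd
  have hcx : IsCoprime M x := by
    refine ⟨1 - x, x ^ N, ?_⟩
    have := geom_sum_mul x (N + 1)
    have hxx : x ^ N * x = x ^ (N + 1) := by ring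
    rw [← hM] at this
    linear_combination -this
  exact (hcx.pow_right).dvd_of_dvd_mul_right hdvd2
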